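/- Let π = v₀v₁…v_ℓ be a chordless s-t path in a simple graph G on n vertices. Define the reduced degree dᵢ of vᵢ as the number of neighbours of vᵢ that are not good neighbours of any vⱼ with j ≤ i, plus one (for v_{i+1}). Then the sum of the reduced degrees over all vertices of π is at most 2n. -/

import Mathlib

open SimpleGraph

variable {V : Type*}

/-- `l` is a (simple) path in `G`, given as its list of vertices. -/
def IsPathL (G : SimpleGraph V) (l : List V) : Prop :=
  l.Chain' G.Adj ∧ l.Nodup

/-- `l` is an `s`-`t` path in `G`. -/
def IsStPathL (G : SimpleGraph V) (s t : V) (l : List V) : Prop :=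
  IsPathL G l ∧ l.head? = some s ∧ l.getLast? = some t

/-- No two non-consecutive vertices of `l` are adjacent in `G`. -/
def NoChord (G : SimpleGraph V) (l : List V) : Prop :=
  ∀ (i j : ℕ) (hi : i < l.length) (hj : j < l.length), i + 1 < j →
    ¬ G.Adj (l.get ⟨i, hi⟩) (l.get ⟨j, hj⟩)

/-- `l` is a chordless (induced) `s`-`t` path in `G`. -/
def IsChordlessStPathL (G : SimpleGraph V) (s t : V) (l : List V) : Prop :=
  IsStPathL G s t l ∧ NoChord G l

/-- `x` is a good neighbour of `vᵢ` (the `i`-th vertex of `l`): some chordless `s`-`t`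
path of `G` has `v₀ v₁ … vᵢ x` as a prefix. -/
def GoodNbr (G : SimpleGraph V) (s t : V) (l : List V) (i : ℕ) (x : V) : Prop :=
  ∃ l' : List V, IsChordlessStPathL G s t l' ∧ (l.take (i + 1) ++ [x]) <+: l'

-- auxiliary lemmas

lemma getElem_congr' (l : List V) {i j : ℕ} (h : i = j) (hi : i < l.length) :
    l[i]'hi = l[j]'(h ▸ hi) := by subst h; rfl

lemma head?_eq_some_getElem (l : List V) (h : 0 < l.length) :
    l.head? = some (l[0]'h) := by
  rcases l with _ | ⟨a, l⟩
  · simp at h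
  · simp

lemma getLast?_eq_some_getElem (l : List V) (h : 0 < l.length) :
    l.getLast? = some (l[l.length - 1]'(by omega)) := by
  rw [List.getLast?_eq_getLast (by rw [← List.length_pos_iff]; omega), List.getLast_eq_getElem]

lemma nochord' {G : SimpleGraph V} {l : List V} (hC : NoChord G l) :
    ∀ (i j : ℕ) (hi : i < l.length) (hj : j < l.length), i + 1 < j →
      ¬ G.Adj (l[i]'hi) (l[j]'hj) := by
  intro i j hi hj hij
  simpa [List.get_eq_getElem] using hC i j hi hj hij

lemma adj_indices {G : SimpleGraph V} {l : List V} (hC : NoChord G l)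
    {i j : ℕ} (hi : i < l.length) (hj : j < l.length)
    (hadj : G.Adj (l[i]'hi) (l[j]'hj)) : j = i + 1 ∨ i = j + 1 := by
  rcases lt_trichotomy i j with h | h | h
  · left; by_contra hne; exact nochord' hC i j hi hj (by omega) hadj
  · subst h; exact absurd hadj (G.irrefl)
  · right; by_contra hne; exact nochord' hC j i hj hi (by omega) hadj.symm

lemma chain'_iff_getElem' (l : List V) (R : V → V → Prop) :
    l.Chain' R ↔ ∀ i (h : i + 1 < l.length), R (l[i]'(by omega)) (l[i+1]'h) := by
  show List.IsChain R l ↔ _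
  rw [List.isChain_iff_getElem]

lemma shortcut {G : SimpleGraph V} {s t : V} {l : List V}
    (hl : IsChordlessStPathL G s t l) (x : V) (hx : x ∉ l)
    {a b : ℕ} (ha : a < l.length) (hb : b < l.length) (hab : a + 2 ≤ b)
    (hadja : G.Adj (l[a]'ha) x) (hadjb : G.Adj x (l[b]'hb))
    (hmin : ∀ k (hk : k < l.length), k < a → ¬ G.Adj (l[k]'hk) x)
    (hmax : ∀ k (hk : k < l.length), b < k → ¬ G.Adj x (l[k]'hk)) :
    GoodNbr G s t l a x := by
  obtain ⟨⟨⟨hchain, hnodup⟩, hhead, hlast⟩, hC⟩ := hl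
  set T := l.take (a + 1) with hT
  set D := l.drop b with hD
  set Q := T ++ x :: D with hQ
  have hTlen : T.length = a + 1 := by simp [hT]; omega
  have hDlen : D.length = l.length - b := by simp [hD]
  have hQlen : Q.length = (a + 2) + (l.length - b) := by
    simp [hQ, hTlen, hDlen]; omega
  have hQlen' : ∀ p, p < Q.length ↔ p < (a + 2) + (l.length - b) := by
    intro p; rw [hQlen]
  have hQget : ∀ p (hp : p < Q.length),
      Q[p] = if h : p ≤ a then l[p]'(by omega)
        else if h2 : p = a + 1 then x
        else l[b + (p - (a + 2))]'(by rw [hQlen] at hp; omega) := by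
    intro p hp
    have hp' : p < (T ++ (x :: D)).length := hp
    by_cases h : p ≤ a
    · rw [dif_pos h]
      have h1 : (T ++ (x :: D))[p]'hp' = T[p]'(by omega) :=
        List.getElem_append_left (by omega)
      have h2 : T[p]'(by omega) = l[p]'(by omega) := List.getElem_take ..
      exact h1.trans h2
    · rw [dif_neg h]
      have hge : T.length ≤ p := by omega
      have h1 : (T ++ (x :: D))[p]'hp' = (x :: D)[p - T.length]'(by
          simp only [List.length_append] at hp' ⊢; omega) :=
        List.getElem_append_right hge
      by_cases h2 : p = a + 1
      · rw [dif_pos h2]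
        have e : p - T.length = 0 := by omega
        rw [h1, getElem_congr' _ e]
        rfl
      · rw [dif_neg h2]
        have e : p - T.length = (p - (a + 2)) + 1 := by omega
        rw [h1, getElem_congr' _ e, List.getElem_cons_succ]
        have h3 : D[p - (a+2)]'(by omega) = l[b + (p - (a+2))]'(by
            rw [hQlen] at hp; omega) := List.getElem_drop ..
        exact h3
  have hedge : ∀ i (h : i + 1 < l.length), G.Adj (l[i]'(by omega)) (l[i+1]'h) :=
    (chain'_iff_getElem' l G.Adj).mp hchain
  have hlpos : 0 < l.length := by omega
  have hQchain : Q.Chain' G.Adj := by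
    rw [chain'_iff_getElem']
    intro p hp
    rw [hQget p (by omega), hQget (p+1) hp]
    rw [hQlen] at hp
    by_cases h1 : p + 1 ≤ a
    · rw [dif_pos (by omega : p ≤ a), dif_pos h1]
      exact hedge p (by omega)
    · by_cases h2 : p = a
      · subst h2
        rw [dif_pos le_rfl, dif_neg h1, dif_pos rfl]
        exact hadja
      · by_cases h3 : p = a + 1
        · rw [dif_neg (by omega), dif_pos h3, dif_neg (by omega), dif_neg (by omega)]
          have e : b + (p + 1 - (a+2)) = b := by omega
          rw [getElem_congr' _ e]
          exact hadjb
        · rw [dif_neg (by omega), dif_neg h3, dif_neg (by omega), dif_neg (by omega)]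
          have e : b + (p + 1 - (a+2)) = (b + (p - (a+2))) + 1 := by omega
          rw [getElem_congr' _ e]
          exact hedge _ (by omega)
  have hTsub : T.Sublist l := List.take_sublist _ _
  have hDsub : D.Sublist l := List.drop_sublist _ _
  have hTD : (T ++ D).Nodup := by
    have h1 : D.Sublist (l.drop (a+1)) := by
      have e : D = (l.drop (a+1)).drop (b - (a+1)) := by
        rw [List.drop_drop]
        have e2 : a + 1 + (b - (a+1)) = b := by omega
        rw [e2]
      rw [e]; exact List.drop_sublist _ _
    have h2 : (T ++ D).Sublist (T ++ l.drop (a+1)) := List.Sublist.append_left h1 _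
    have h3 : T ++ l.drop (a+1) = l := List.take_append_drop _ _
    exact (h3 ▸ h2).nodup hnodup
  have hQnodup : Q.Nodup := by
    refine List.nodup_append'.mpr ⟨hTsub.nodup hnodup, ?_, ?_⟩
    · exact List.nodup_cons.mpr ⟨fun hxd => hx (hDsub.subset hxd), hDsub.nodup hnodup⟩
    · intro y hyT hyM
      rcases List.mem_cons.mp hyM with rfl | hyD
      · exact hx (hTsub.subset hyT)
      · exact (List.nodup_append'.mp hTD).2.2 hyT hyD
  have hQpos : 0 < Q.length := by rw [hQlen]; omega
  have hQhead : Q.head? = some s := by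
    rw [head?_eq_some_getElem Q hQpos, hQget 0 hQpos, dif_pos (Nat.zero_le a)]
    rw [head?_eq_some_getElem l hlpos] at hhead
    exact hhead
  have hQlast : Q.getLast? = some t := by
    rw [getLast?_eq_some_getElem Q hQpos, hQget (Q.length - 1) (by omega)]
    rw [dif_neg (by rw [hQlen]; omega), dif_neg (by rw [hQlen]; omega)]
    have e : b + (Q.length - 1 - (a+2)) = l.length - 1 := by rw [hQlen]; omega
    rw [getElem_congr' _ e]
    rw [getLast?_eq_some_getElem l hlpos] at hlast
    exact hlast
  have hQnc : NoChord G Q := by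
    intro i j hi hj hij
    rw [List.get_eq_getElem, List.get_eq_getElem, hQget i hi, hQget j hj]
    rw [hQlen] at hi hj
    by_cases hia : i ≤ a
    · by_cases hja : j ≤ a
      · rw [dif_pos hia, dif_pos hja]
        exact nochord' hC i j _ _ hij
      · by_cases hj2 : j = a+1
        · rw [dif_pos hia, dif_neg hja, dif_pos hj2]
          exact hmin i _ (by omega)
        · rw [dif_pos hia, dif_neg hja, dif_neg hj2]
          exact nochord' hC i _ _ _ (by omega)
    · by_cases hi2 : i = a+1
      · rw [dif_neg hia, dif_pos hi2, dif_neg (by omega), dif_neg (by omega)]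
        exact hmax _ _ (by omega)
      · rw [dif_neg hia, dif_neg hi2, dif_neg (by omega), dif_neg (by omega)]
        exact nochord' hC _ _ _ _ (by omega)
  refine ⟨Q, ⟨⟨⟨hQchain, hQnodup⟩, hQhead, hQlast⟩, hQnc⟩, ⟨D, ?_⟩⟩
  show (T ++ [x]) ++ D = Q
  rw [List.append_assoc]
  rfl

lemma cover {G : SimpleGraph V} {s t : V} {l : List V}
    (hl : IsChordlessStPathL G s t l) (hpos : 0 < l.length) (x : V) :
    ∃ a b : Fin l.length, ∀ i : Fin l.length,
      ((G.Adj (l.get i) x ∧ ∀ j ≤ (i : ℕ), ¬ GoodNbr G s t l j x) ∨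
        (∃ h : (i : ℕ) + 1 < l.length, x = l.get ⟨(i : ℕ) + 1, h⟩)) → i = a ∨ i = b := by
  classical
  have hC := hl.2
  have hnodup := hl.1.1.2
  by_cases hmem : x ∈ l
  · -- x is a vertex of the path: at most one index
    obtain ⟨m, hm, hxm⟩ := List.getElem_of_mem hmem
    have hval : ∃ c : ℕ, ∀ i : Fin l.length,
        ((G.Adj (l.get i) x ∧ ∀ j ≤ (i : ℕ), ¬ GoodNbr G s t l j x) ∨
          (∃ h : (i : ℕ) + 1 < l.length, x = l.get ⟨(i : ℕ) + 1, h⟩)) → (i : ℕ) = c := by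
      by_cases hm0 : m = 0
      · refine ⟨1, fun i hP => ?_⟩
        rcases hP with ⟨hadj, _⟩ | ⟨h, hx2⟩
        · have hadj' : G.Adj (l[(i : ℕ)]'i.isLt) (l[m]'hm) := by
            rw [hxm]; simpa using hadj
          rcases adj_indices hC i.isLt hm hadj' with h1 | h1 <;> omega
        · have e : l[m]'hm = l[(i : ℕ) + 1]'h := by
            rw [hxm]; simpa using hx2
          have : m = (i : ℕ) + 1 := (List.Nodup.getElem_inj_iff hnodup).mp e
          omega
      · -- m ≥ 1
        have hgood : GoodNbr G s t l (m - 1) x := by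
          refine ⟨l, hl, ?_⟩
          have e : (m - 1) + 1 = m := by omega
          have e2 : l.take m ++ [x] = l.take (m + 1) := by
            rw [← hxm, ← List.take_concat_get']
          rw [e, e2]
          exact List.take_prefix _ _
        refine ⟨m - 1, fun i hP => ?_⟩
        rcases hP with ⟨hadj, hng⟩ | ⟨h, hx2⟩
        · have hadj' : G.Adj (l[(i : ℕ)]'i.isLt) (l[m]'hm) := by
            rw [hxm]; simpa using hadj
          have hcand := adj_indices hC i.isLt hm hadj'
          exact absurd hgood (hng (m - 1) (by omega))
        · have e : l[m]'hm = l[(i : ℕ) + 1]'h := by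
            rw [hxm]; simpa using hx2
          have : m = (i : ℕ) + 1 := (List.Nodup.getElem_inj_iff hnodup).mp e
          omega
    obtain ⟨c, hc⟩ := hval
    by_cases hex : ∃ i : Fin l.length,
        ((G.Adj (l.get i) x ∧ ∀ j ≤ (i : ℕ), ¬ GoodNbr G s t l j x) ∨
          (∃ h : (i : ℕ) + 1 < l.length, x = l.get ⟨(i : ℕ) + 1, h⟩))
    · obtain ⟨i0, hi0⟩ := hex
      exact ⟨i0, i0, fun i hi => Or.inl (Fin.ext ((hc i hi).trans (hc i0 hi0).symm))⟩
    · exact ⟨⟨0, hpos⟩, ⟨0, hpos⟩, fun i hi => absurd ⟨i, hi⟩ hex⟩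
  · -- x not on the path
    set NF : Finset (Fin l.length) :=
      Finset.univ.filter (fun i : Fin l.length => G.Adj (l.get i) x) with hNF
    have hPmem : ∀ i : Fin l.length,
        ((G.Adj (l.get i) x ∧ ∀ j ≤ (i : ℕ), ¬ GoodNbr G s t l j x) ∨
          (∃ h : (i : ℕ) + 1 < l.length, x = l.get ⟨(i : ℕ) + 1, h⟩)) → i ∈ NF := by
      intro i hP
      rcases hP with ⟨hadj, _⟩ | ⟨h, hx2⟩
      · simp only [hNF, Finset.mem_filter, Finset.mem_univ, true_and]
        simpa using hadj
      · exact absurd (hx2 ▸ List.get_mem l _) hmem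
    by_cases hne : NF.Nonempty
    · set A := NF.min' hne with hA
      set B := NF.max' hne with hB
      have hAmem : A ∈ NF := NF.min'_mem hne
      have hBmem : B ∈ NF := NF.max'_mem hne
      have hadjA : G.Adj (l[(A : ℕ)]'A.isLt) x := by
        have := (Finset.mem_filter.mp hAmem).2
        simpa using this
      have hadjB : G.Adj (l[(B : ℕ)]'B.isLt) x := by
        have := (Finset.mem_filter.mp hBmem).2
        simpa using this
      by_cases hsmall : (B : ℕ) ≤ (A : ℕ) + 1
      · refine ⟨A, B, fun i hP => ?_⟩
        have hiN := hPmem i hP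
        have h1 : A ≤ i := NF.min'_le i hiN
        have h2 : i ≤ B := NF.le_max' i hiN
        rw [Fin.le_def] at h1 h2
        have : (i : ℕ) = (A : ℕ) ∨ (i : ℕ) = (B : ℕ) := by omega
        rcases this with h | h
        · exact Or.inl (Fin.ext h)
        · exact Or.inr (Fin.ext h)
      · have hgood : GoodNbr G s t l (A : ℕ) x := by
          refine shortcut hl x hmem A.isLt B.isLt (by omega) hadjA hadjB.symm ?_ ?_
          · intro k hk hka hadj
            have hkN : (⟨k, hk⟩ : Fin l.length) ∈ NF := by simpa [hNF] using hadj
            have := NF.min'_le _ hkN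
            rw [Fin.le_def] at this
            simp only [← hA] at this
            omega
          · intro k hk hbk hadj
            have hkN : (⟨k, hk⟩ : Fin l.length) ∈ NF := by simpa [hNF] using hadj.symm
            have := NF.le_max' _ hkN
            rw [Fin.le_def] at this
            simp only [← hB] at this
            omega
        refine ⟨A, A, fun i hP => ?_⟩
        rcases hP with ⟨hadj, hng⟩ | ⟨h, hx2⟩
        · have hiN : i ∈ NF := by
            simp only [hNF, Finset.mem_filter, Finset.mem_univ, true_and]
            simpa using hadj
          have h1 : A ≤ i := NF.min'_le i hiN
          rw [Fin.le_def] at h1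
          exact absurd hgood (hng (A : ℕ) h1)
        · exact absurd (hx2 ▸ List.get_mem l _) hmem
    · refine ⟨⟨0, hpos⟩, ⟨0, hpos⟩, fun i hi => absurd ⟨i, hPmem i hi⟩ hne⟩

/-- For a chordless `s`-`t` path `π = v₀ … v_ℓ`, the sum over `i` of the reduced degrees
`dᵢ = |(N(vᵢ) \ ⋃_{j ≤ i} good(vⱼ)) ∪ {v_{i+1}}|` is at most `2n`. -/
theorem stmt4 [Fintype V] (G : SimpleGraph V) (s t : V) (l : List V)
    (hl : IsChordlessStPathL G s t l) :
    ∑ i : Fin l.length,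
      ((G.neighborSet (l.get i) \ ⋃ j ∈ {j : ℕ | j ≤ (i : ℕ)}, {x | GoodNbr G s t l j x}) ∪
        {x | ∃ h : (i : ℕ) + 1 < l.length, x = l.get ⟨(i : ℕ) + 1, h⟩}).ncard
      ≤ 2 * Fintype.card V := by
  classical
  rcases Nat.eq_zero_or_pos l.length with h0 | hpos
  · haveI : IsEmpty (Fin l.length) := by rw [h0]; infer_instance
    simp
  set S : Fin l.length → Set V := fun i =>
    (G.neighborSet (l.get i) \ ⋃ j ∈ {j : ℕ | j ≤ (i : ℕ)}, {x | GoodNbr G s t l j x}) ∪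
      {x | ∃ h : (i : ℕ) + 1 < l.length, x = l.get ⟨(i : ℕ) + 1, h⟩} with hS
  show ∑ i : Fin l.length, (S i).ncard ≤ 2 * Fintype.card V
  have hmemS : ∀ (i : Fin l.length) (x : V), x ∈ S i ↔
      ((G.Adj (l.get i) x ∧ ∀ j ≤ (i : ℕ), ¬ GoodNbr G s t l j x) ∨
        (∃ h : (i : ℕ) + 1 < l.length, x = l.get ⟨(i : ℕ) + 1, h⟩)) := by
    intro i x
    simp [hS, Set.mem_iUnion, SimpleGraph.mem_neighborSet]
  set F : Fin l.length → Finset V := fun i => (Set.toFinite (S i)).toFinset with hF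
  have hcard : ∀ i, (S i).ncard = (F i).card := fun i => Set.ncard_eq_toFinset_card _ _
  have hmemF : ∀ i x, x ∈ F i ↔ x ∈ S i := fun i x => Set.Finite.mem_toFinset _
  have e1 : ∀ i, (F i).card = ∑ x : V, if x ∈ F i then 1 else 0 := fun i => by
    rw [← Finset.card_filter, Finset.filter_univ_mem]
  have hbound : ∀ x : V, (∑ i : Fin l.length, if x ∈ F i then 1 else 0) ≤ 2 := by
    intro x
    obtain ⟨a, b, hab⟩ := cover hl hpos x
    rw [← Finset.card_filter]
    have hsub : Finset.univ.filter (fun i => x ∈ F i) ⊆ ({a, b} : Finset (Fin l.length)) := by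
      intro i hi
      simp only [Finset.mem_filter, Finset.mem_univ, true_and] at hi
      have := hab i ((hmemS i x).mp ((hmemF i x).mp hi))
      simpa [Finset.mem_insert, Finset.mem_singleton] using this
    refine le_trans (Finset.card_le_card hsub) ?_
    have := Finset.card_insert_le a ({b} : Finset (Fin l.length))
    simpa using this
  calc ∑ i, (S i).ncard
      = ∑ i, (F i).card := Finset.sum_congr rfl fun i _ => hcard i
    _ = ∑ i, ∑ x : V, (if x ∈ F i then 1 else 0) := Finset.sum_congr rfl fun i _ => e1 i
    _ = ∑ x : V, ∑ i, (if x ∈ F i then 1 else 0) := Finset.sum_comm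
    _ ≤ ∑ _x : V, 2 := Finset.sum_le_sum fun x _ => hbound x
    _ = 2 * Fintype.card V := by simp [Finset.sum_const, Finset.card_univ, mul_comm]
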